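/- Let 1 → G → Γ → Π → 1 be an extension of groups with section s : Π → Γ of σ (s(1) = 1), and f, Ψ, h as associated to s. Then: (1) f(σ(γ₁), σ(γ₂)) = Ψ(σ(γ₁))(h(γ₂)⁻¹)·h(γ₁)⁻¹·h(γ₁γ₂) for all γ₁, γ₂ ∈ Γ; (2) for every homogeneous bounded 2-cocycle c on G, setting T_c(γ₁,γ₂) := c(f(σ(γ₁)), σ(γ₂)), h(γ₁γ₂)⁻¹) − c(Ψ(σ(γ₁))(h(γ₂)⁻¹), h(γ₁)⁻¹) and e_c(α,β,γ) := c(Ψ(α)(f(β,γ)), f(α,βγ)) − c(f(α,β), f(αβ,γ)) for α,β,γ ∈ Π, one has for all γ₁, γ₂, γ₃ ∈ Γ: e_c(σ(γ₁), σ(γ₂), σ(γ₃)) = T_{c'}(γ₂,γ₃) − T_c(γ₁γ₂,γ₃) + T_c(γ₁,γ₂γ₃) − T_c(γ₁,γ₂), where c'(g,h) := c(Ψ(σ(γ₁))(g), Ψ(σ(γ₁))(h)). (This expresses that the pullback σ*(θ̄_{Ψ,f}) of the class [θ] is the coboundary of the bounded cochain T̄, so σ_b([θ]) = 0 in H_b³(Γ,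 H̄₂^{ℓ¹}(G,ℝ)).) -/
import Mathlib


/-- The cochain `T_c(γ₁,γ₂) = c(f(σγ₁,σγ₂), h(γ₁γ₂)⁻¹) − c(Ψ(σγ₁)(h(γ₂)⁻¹), h(γ₁)⁻¹)`
associated to an extension `1 → G → Γ → Π → 1` with section data `(f, Ψ, h)` and a real
2-cochain `c` on `G`. -/
def Tcochain {G Γ P : Type*} [Group G] [Group Γ] [Group P]
    (σ : Γ →* P) (f : P → P → G) (Ψ : P → G → G) (h : Γ → G)
    (c : G → G → ℝ) (γ₁ γ₂ : Γ) : ℝ :=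
  c (f (σ γ₁) (σ γ₂)) ((h (γ₁ * γ₂))⁻¹) - c (Ψ (σ γ₁) ((h γ₂)⁻¹)) ((h γ₁)⁻¹)

/-- The composition cochain `e_c(α,β,γ) = c(Ψ(α)(f(β,γ)), f(α,βγ)) − c(f(α,β), f(αβ,γ))`. -/
def eCochain {G P : Type*} [Group G] [Group P] (Ψ : P → G → G) (f : P → P → G)
    (c : G → G → ℝ) (α β γ : P) : ℝ :=
  c (Ψ α (f β γ)) (f α (β * γ)) - c (f α β) (f (α * β) γ)


namespace Stmt19Aux

@[ext] structure Ext (G : Type*) where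
  g : G
  t : ℝ

variable {G : Type*} [Group G]

def egroup (c : G → G → ℝ)
    (hcoc : ∀ g g' g'' : G, c g' g'' - c (g * g') g'' + c g (g' * g'') - c g g' = 0)
    (hn1 : ∀ g : G, c g 1 = 0) (hn2 : ∀ g : G, c 1 g = 0) : Group (Ext G) where
  mul a b := ⟨a.g * b.g, a.t + b.t + c a.g b.g⟩
  one := ⟨1, 0⟩
  inv a := ⟨a.g⁻¹, -a.t - c a.g⁻¹ a.g⟩
  mul_assoc a b d := by
    refine Ext.ext ?_ ?_
    · exact mul_assoc a.g b.g d.g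
    · have := hcoc a.g b.g d.g
      show a.t + b.t + c a.g b.g + d.t + c (a.g * b.g) d.g =
        a.t + (b.t + d.t + c b.g d.g) + c a.g (b.g * d.g)
      linarith
  one_mul a := by
    refine Ext.ext ?_ ?_
    · exact one_mul a.g
    · show 0 + a.t + c 1 a.g = a.t
      rw [hn2]; ring
  mul_one a := by
    refine Ext.ext ?_ ?_
    · exact mul_one a.g
    · show a.t + 0 + c a.g 1 = a.t
      rw [hn1]; ring
  inv_mul_cancel a := by
    refine Ext.ext ?_ ?_
    · exact inv_mul_cancel a.g
    · show -a.t - c a.g⁻¹ a.g + a.t + c a.g⁻¹ a.g = 0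
      ring

theorem arch (t k : ℝ) (hbound : ∀ n : ℕ, |(n:ℝ)*t| ≤ k) : t = 0 := by
  by_contra hne
  obtain ⟨n, hn⟩ := exists_nat_gt (k / |t|)
  have h1 : 0 < |t| := abs_pos.mpr hne
  have h3 : k < n * |t| := (div_lt_iff₀ h1).mp hn
  have h4 := hbound n
  rw [abs_mul, Nat.abs_cast] at h4
  linarith

theorem key (c : G → G → ℝ)
    (hcoc : ∀ g g' g'' : G, c g' g'' - c (g * g') g'' + c g (g' * g'') - c g g' = 0)
    (hn1 : ∀ g : G, c g 1 = 0) (hn2 : ∀ g : G, c 1 g = 0)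
    (hhom : ∀ (g : G) (n m : ℕ), c (g ^ n) (g ^ m) = 0)
    (hbdd : ∃ k : ℝ, ∀ g g' : G, |c g g'| ≤ k) :
    ∀ x1 x2 x3 x4 x5 w : G,
      c (x1*x2*x3*x4*(x1*x2*x3)⁻¹*x1*x5) (x5⁻¹*x2*w)
        - c (x1*x2*x3) (x4*x3⁻¹*w)
      = (c (x1*x2*x3*x4*(x1*x2*x3)⁻¹*x1*x5) x5⁻¹
          - c (x1*x2*x3*x4*(x1*x2*x3)⁻¹) x1)
        - (c (x4*x3⁻¹*w) w⁻¹ - c x4 x3⁻¹)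
        + (c (x5⁻¹*x2*w) w⁻¹ - c x5⁻¹ x2)
        - (c (x1*x2*x3) x3⁻¹ - c x1 x2) := by
  obtain ⟨k, hk⟩ := hbdd
  letI : Group (Ext G) := egroup c hcoc hn1 hn2
  have mulmk : ∀ (a b : G) (s t : ℝ), (⟨a,s⟩ : Ext G) * ⟨b,t⟩ = ⟨a*b, s+t+c a b⟩ :=
    fun _ _ _ _ => rfl
  have invmk : ∀ (a : G) (s : ℝ), (⟨a,s⟩ : Ext G)⁻¹ = ⟨a⁻¹, -s - c a⁻¹ a⟩ :=
    fun _ _ => rfl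
  have onemk : (1 : Ext G) = ⟨1, 0⟩ := rfl
  have powmk : ∀ (a : G) (s : ℝ) (n : ℕ), (⟨a,s⟩ : Ext G)^n = ⟨a^n, n*s⟩ := by
    intro a s n
    induction n with
    | zero => rw [pow_zero, pow_zero, onemk]; norm_num
    | succ n ih =>
      rw [pow_succ, ih, mulmk (a^n) a (n*s) s]
      have hc : c (a^n) a = 0 := by
        have := hhom a n 1; rwa [pow_one] at this
      rw [hc, ← pow_succ]
      refine Ext.ext rfl ?_
      show (n:ℝ)*s + s + 0 = ((n+1 : ℕ):ℝ)*s
      push_cast; ring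
  have central : ∀ (t : ℝ) (a : Ext G), a * ⟨1, t⟩ = ⟨1, t⟩ * a := by
    intro t a
    obtain ⟨ag, at'⟩ := a
    rw [mulmk ag 1 at' t, mulmk 1 ag t at', hn1, hn2]
    refine Ext.ext (by simp) ?_
    show at' + t + 0 = t + at' + 0
    ring
  have zmul : ∀ s t : ℝ, (⟨1,s⟩ : Ext G) * ⟨1,t⟩ = ⟨1, s+t⟩ := by
    intro s t
    rw [mulmk 1 1 s t, hn1]
    exact Ext.ext (one_mul 1) (by ring)
  -- Lemma A: c g g⁻¹ = 0
  have lemA : ∀ g : G, c g g⁻¹ = 0 := by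
    intro g
    have inner : (⟨g,0⟩ : Ext G) * ⟨g⁻¹,0⟩ = ⟨1, c g g⁻¹⟩ := by
      rw [mulmk g g⁻¹ 0 0, mul_inv_cancel]
      exact Ext.ext rfl (by ring)
    have claim : ∀ m : ℕ, (⟨g,0⟩ : Ext G)^(m+1) * (⟨g⁻¹,0⟩ : Ext G)^m = ⟨g, m * c g g⁻¹⟩ := by
      intro m
      induction m with
      | zero => rw [pow_one, pow_zero, mul_one]; norm_num
      | succ m ih =>
        calc (⟨g,0⟩ : Ext G)^(m+1+1) * (⟨g⁻¹,0⟩ : Ext G)^(m+1)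
            = (⟨g,0⟩ : Ext G)^(m+1) * ((⟨g,0⟩ : Ext G) * (⟨g⁻¹,0⟩ : Ext G)) * (⟨g⁻¹,0⟩ : Ext G)^m := by
              rw [pow_succ, pow_succ']; group
          _ = (⟨g,0⟩ : Ext G)^(m+1) * ⟨1, c g g⁻¹⟩ * (⟨g⁻¹,0⟩ : Ext G)^m := by rw [inner]
          _ = (⟨g,0⟩ : Ext G)^(m+1) * ((⟨g⁻¹,0⟩ : Ext G)^m * ⟨1, c g g⁻¹⟩) := by
              rw [mul_assoc, ← central (c g g⁻¹) ((⟨g⁻¹,0⟩ : Ext G)^m)]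
          _ = (⟨g,0⟩ : Ext G)^(m+1) * (⟨g⁻¹,0⟩ : Ext G)^m * ⟨1, c g g⁻¹⟩ := by rw [mul_assoc]
          _ = (⟨g, m * c g g⁻¹⟩ : Ext G) * ⟨1, c g g⁻¹⟩ := by rw [ih]
          _ = ⟨g, (m+1 : ℕ) * c g g⁻¹⟩ := by
              rw [mulmk g 1 _ _, hn1]
              refine Ext.ext (mul_one g) ?_
              show (m:ℝ) * c g g⁻¹ + c g g⁻¹ + 0 = ((m+1:ℕ):ℝ) * c g g⁻¹
              push_cast; ring
    have bound : ∀ m : ℕ, |(m:ℝ) * c g g⁻¹| ≤ k := by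
      intro m
      have h1 := claim m
      rw [powmk g 0 (m+1), powmk g⁻¹ 0 m, mulmk (g^(m+1)) ((g⁻¹)^m) _ _] at h1
      have h2 : ((m+1:ℕ):ℝ)*0 + (m:ℝ)*0 + c (g^(m+1)) ((g⁻¹)^m) = (m:ℝ) * c g g⁻¹ :=
        congrArg Ext.t h1
      have h3 : c (g^(m+1)) ((g⁻¹)^m) = (m:ℝ) * c g g⁻¹ := by
        rw [← h2]; ring
      rw [← h3]; exact hk _ _
    exact arch _ k bound
  have lemA' : ∀ g : G, c g⁻¹ g = 0 := by
    intro g; have := lemA g⁻¹; rwa [inv_inv] at this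
  have Linv : ∀ g : G, (⟨g,0⟩ : Ext G)⁻¹ = ⟨g⁻¹, 0⟩ := by
    intro g; rw [invmk g 0, lemA']; norm_num
  -- Lemma B: conjugation invariance
  have lemB : ∀ a b : G, c a b + c (a*b) a⁻¹ = 0 := by
    intro a b
    have claim : ∀ n : ℕ, c a (b^n) + c (a * b^n) a⁻¹ = n * (c a b + c (a*b) a⁻¹) := by
      intro n
      have e1 : (⟨a,0⟩ : Ext G) * (⟨b,0⟩ : Ext G)^n * (⟨a,0⟩ : Ext G)⁻¹
          = ((⟨a,0⟩ : Ext G) * (⟨b,0⟩ : Ext G) * (⟨a,0⟩ : Ext G)⁻¹)^n := (conj_pow).symm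
      have lhs : (⟨a,0⟩ : Ext G) * (⟨b,0⟩ : Ext G)^n * (⟨a,0⟩ : Ext G)⁻¹
          = ⟨a*b^n*a⁻¹, 0 + 0 + c a (b^n) + 0 + c (a*b^n) a⁻¹⟩ := by
        rw [powmk b 0 n, Linv a]
        rw [mulmk a (b^n) 0 ((n:ℝ)*0)]
        rw [mulmk (a*b^n) a⁻¹ _ 0]
        refine Ext.ext rfl ?_
        show 0 + (n:ℝ)*0 + c a (b^n) + 0 + c (a*b^n) a⁻¹ = 0 + 0 + c a (b^n) + 0 + c (a*b^n) a⁻¹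
        ring
      have rhs : ((⟨a,0⟩ : Ext G) * (⟨b,0⟩ : Ext G) * (⟨a,0⟩ : Ext G)⁻¹)^n
          = ⟨(a*b*a⁻¹)^n, n * (0 + 0 + c a b + 0 + c (a*b) a⁻¹)⟩ := by
        rw [Linv a, mulmk a b 0 0, mulmk (a*b) a⁻¹ _ 0, powmk]
      rw [lhs, rhs] at e1
      have h2 : 0 + 0 + c a (b^n) + 0 + c (a*b^n) a⁻¹
          = (n:ℝ) * (0 + 0 + c a b + 0 + c (a*b) a⁻¹) := congrArg Ext.t e1
      linarith [h2]
    have bound : ∀ n : ℕ, |(n:ℝ) * (c a b + c (a*b) a⁻¹)| ≤ k + k := by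
      intro n
      rw [← claim n]
      calc |c a (b^n) + c (a * b^n) a⁻¹| ≤ |c a (b^n)| + |c (a * b^n) a⁻¹| := abs_add_le _ _
        _ ≤ k + k := add_le_add (hk _ _) (hk _ _)
    exact arch _ (k+k) bound
  -- S1
  have S1 : ∀ A y : G, c (A*y) y⁻¹ = -(c A y) := by
    intro A y
    have hc := hcoc A y y⁻¹
    rw [mul_inv_cancel, hn1] at hc
    have := lemA y
    linarith
  intro x1 x2 x3 x4 x5 w
  set X : G := x1*x2*x3 with hX
  set R : G := X*x4*X⁻¹ with hR
  set s1 : ℝ := -(c R x1) - c (R*x1) x5 with hs1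
  set s2 : ℝ := -(c x5⁻¹ x2) - c (x5⁻¹*x2) w with hs2
  set s3 : ℝ := c x1 x2 + c (x1*x2) x3 with hs3
  set q : ℝ := c x4 x3⁻¹ + c (x4*x3⁻¹) w with hq
  have hpull : ∀ (a b : Ext G) (s t : ℝ), (a*⟨1,s⟩) * (b*⟨1,t⟩) = a*b*⟨1,s+t⟩ := by
    intro a b s t
    calc (a*⟨1,s⟩) * (b*⟨1,t⟩) = a*(⟨1,s⟩*(b*⟨1,t⟩)) := by rw [mul_assoc]
      _ = a*((b*⟨1,t⟩)*⟨1,s⟩) := by rw [← central s (b*⟨1,t⟩)]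
      _ = a*(b*(⟨1,t⟩*⟨1,s⟩)) := by rw [mul_assoc b]
      _ = a*(b*⟨1,s+t⟩) := by rw [zmul t s, show t+s = s+t from add_comm t s]
      _ = a*b*⟨1,s+t⟩ := by rw [mul_assoc]
  have D1 : (⟨R*x1*x5, 0⟩ : Ext G) = ((⟨R,0⟩ : Ext G) * ⟨x1,0⟩ * ⟨x5,0⟩) * ⟨1, s1⟩ := by
    rw [mulmk R x1 0 0, mulmk (R*x1) x5 _ 0, mulmk (R*x1*x5) 1 _ s1, hn1, mul_one]
    refine Ext.ext rfl ?_
    show (0:ℝ) = 0 + 0 + c R x1 + 0 + c (R*x1) x5 + s1 + 0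
    rw [hs1]; ring
  have D2 : (⟨x5⁻¹*x2*w, 0⟩ : Ext G) = ((⟨x5,0⟩ : Ext G)⁻¹ * ⟨x2,0⟩ * ⟨w,0⟩) * ⟨1, s2⟩ := by
    rw [Linv x5, mulmk x5⁻¹ x2 0 0, mulmk (x5⁻¹*x2) w _ 0, mulmk (x5⁻¹*x2*w) 1 _ s2, hn1, mul_one]
    refine Ext.ext rfl ?_
    show (0:ℝ) = 0 + 0 + c x5⁻¹ x2 + 0 + c (x5⁻¹*x2) w + s2 + 0
    rw [hs2]; ring
  have D3 : (⟨R, 0⟩ : Ext G)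
      = ((⟨x1,0⟩ : Ext G)*⟨x2,0⟩*⟨x3,0⟩) * ⟨x4,0⟩ * ((⟨x1,0⟩ : Ext G)*⟨x2,0⟩*⟨x3,0⟩)⁻¹ := by
    rw [mulmk x1 x2 0 0, mulmk (x1*x2) x3 _ 0, invmk X _, lemA' X,
      mulmk X x4 _ 0, mulmk (X*x4) X⁻¹ _ _]
    refine Ext.ext rfl ?_
    show (0:ℝ) = 0+0+c x1 x2+0+c (x1*x2) x3 + 0 + c X x4
      + (-(0+0+c x1 x2+0+c (x1*x2) x3) - 0) + c (X*x4) X⁻¹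
    have := lemB X x4
    linarith
  have D4 : (⟨x4*x3⁻¹*w, 0⟩ : Ext G) = ((⟨x4,0⟩ : Ext G) * (⟨x3,0⟩ : Ext G)⁻¹ * ⟨w,0⟩) * ⟨1, -q⟩ := by
    rw [Linv x3, mulmk x4 x3⁻¹ 0 0, mulmk (x4*x3⁻¹) w _ 0, mulmk (x4*x3⁻¹*w) 1 _ (-q), hn1, mul_one]
    refine Ext.ext rfl ?_
    show (0:ℝ) = 0 + 0 + c x4 x3⁻¹ + 0 + c (x4*x3⁻¹) w + (-q) + 0
    rw [hq]; ring
  have D5 : (⟨X, 0⟩ : Ext G) = ((⟨x1,0⟩ : Ext G)*⟨x2,0⟩*⟨x3,0⟩) * ⟨1, -s3⟩ := by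
    rw [mulmk x1 x2 0 0, mulmk (x1*x2) x3 _ 0, mulmk X 1 _ (-s3), hn1, mul_one]
    refine Ext.ext rfl ?_
    show (0:ℝ) = 0+0+c x1 x2+0+c (x1*x2) x3 + (-s3) + 0
    rw [hs3]; ring
  have hgrp : ((⟨R,0⟩ : Ext G) * ⟨x1,0⟩ * ⟨x5,0⟩) * ((⟨x5,0⟩ : Ext G)⁻¹ * ⟨x2,0⟩ * ⟨w,0⟩)
      = ((⟨x1,0⟩ : Ext G)*⟨x2,0⟩*⟨x3,0⟩) * ((⟨x4,0⟩ : Ext G) * (⟨x3,0⟩ : Ext G)⁻¹ * ⟨w,0⟩) := by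
    rw [D3]
    group
  have rhs_eq : (⟨X,0⟩ : Ext G) * ⟨x4*x3⁻¹*w, 0⟩ * ⟨1, s1+s2+s3+q⟩
      = ((⟨x1,0⟩ : Ext G)*⟨x2,0⟩*⟨x3,0⟩) * ((⟨x4,0⟩ : Ext G) * (⟨x3,0⟩ : Ext G)⁻¹ * ⟨w,0⟩) * ⟨1, s1+s2⟩ := by
    rw [D5, D4, hpull]
    rw [mul_assoc _ (⟨1, -s3 + -q⟩ : Ext G) _, zmul (-s3 + -q) (s1+s2+s3+q)]
    congr 2
    ring
  have main : (⟨R*x1*x5, 0⟩ : Ext G) * ⟨x5⁻¹*x2*w, 0⟩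
      = (⟨X,0⟩ : Ext G) * ⟨x4*x3⁻¹*w, 0⟩ * ⟨1, s1+s2+s3+q⟩ := by
    rw [D1, D2, hpull, hgrp, rhs_eq]
  have hsc : 0 + 0 + c (R*x1*x5) (x5⁻¹*x2*w)
      = 0 + 0 + c X (x4*x3⁻¹*w) + (s1+s2+s3+q) + c (X*(x4*x3⁻¹*w)) 1 := by
    rw [mulmk (R*x1*x5) (x5⁻¹*x2*w) 0 0, mulmk X (x4*x3⁻¹*w) 0 0,
      mulmk (X*(x4*x3⁻¹*w)) 1 _ _] at main
    exact congrArg Ext.t main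
  rw [hn1] at hsc
  have i1 := S1 (R*x1) x5
  have i2 := S1 (x4*x3⁻¹) w
  have i3 := S1 (x5⁻¹*x2) w
  have i4 := S1 (x1*x2) x3
  rw [hs1, hs2, hs3, hq] at hsc
  linarith [hsc, i1, i2, i3, i4]

end Stmt19Aux

/-- for an extension `1 → G → Γ → Π → 1` with section `s` and associated data
`(f, Ψ, h)`: (1) the non-abelian cocycle `f ∘ (σ × σ)` is expressed via `Ψ` and `h`;
(2) for every homogeneous bounded 2-cocycle `c` on `G`, the pullback `σ*(e_c)` is the
coboundary of the bounded cochain `T` (so `σ_b([θ]) = 0`). -/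
theorem stmt_19 {G Γ P : Type*} [Group G] [Group Γ] [Group P]
    (i : G →* Γ) (σ : Γ →* P)
    (hi_inj : Function.Injective i)
    (hσ_surj : Function.Surjective σ)
    (hrange : ∀ γ : Γ, σ γ = 1 ↔ ∃ g : G, i g = γ)
    (s : P → Γ) (hs : ∀ α : P, σ (s α) = α) (hs1 : s 1 = 1)
    (f : P → P → G) (hf : ∀ α β : P, i (f α β) = s α * s β * (s (α * β))⁻¹)
    (Ψ : P → G → G) (hΨ : ∀ (α : P) (g : G), i (Ψ α g) = s α * i g * (s α)⁻¹)
    (h : Γ → G) (hh : ∀ γ : Γ, γ = i (h γ) * s (σ γ))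
    (c : G → G → ℝ)
    (hc_bdd : ∃ k : ℝ, ∀ g g' : G, |c g g'| ≤ k)
    (hc_cocycle : ∀ g g' g'' : G,
      c g' g'' - c (g * g') g'' + c g (g' * g'') - c g g' = 0)
    (hc_norm : (∀ g : G, c g 1 = 0) ∧ (∀ g : G, c 1 g = 0))
    (hc_hom : ∀ (g : G) (n m : ℕ), c (g ^ n) (g ^ m) = 0) :
    -- (1)
    (∀ γ₁ γ₂ : Γ,
      f (σ γ₁) (σ γ₂) = Ψ (σ γ₁) ((h γ₂)⁻¹) * (h γ₁)⁻¹ * h (γ₁ * γ₂)) ∧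
    -- (2)
    (∀ γ₁ γ₂ γ₃ : Γ,
      eCochain Ψ f c (σ γ₁) (σ γ₂) (σ γ₃) =
        Tcochain σ f Ψ h (fun g g' => c (Ψ (σ γ₁) g) (Ψ (σ γ₁) g')) γ₂ γ₃
          - Tcochain σ f Ψ h c (γ₁ * γ₂) γ₃
          + Tcochain σ f Ψ h c γ₁ (γ₂ * γ₃)
          - Tcochain σ f Ψ h c γ₁ γ₂) := by
  have hs' : ∀ γ : Γ, s (σ γ) = (i (h γ))⁻¹ * γ := by
    intro γ
    rw [eq_inv_mul_iff_mul_eq]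
    exact (hh γ).symm
  have part1 : ∀ γ₁ γ₂ : Γ,
      f (σ γ₁) (σ γ₂) = Ψ (σ γ₁) ((h γ₂)⁻¹) * (h γ₁)⁻¹ * h (γ₁ * γ₂) := by
    intro γ₁ γ₂
    apply hi_inj
    rw [hf, map_mul, map_mul, hΨ, map_inv, map_inv, ← map_mul σ]
    rw [hs' γ₁, hs' γ₂, hs' (γ₁*γ₂)]
    group
  have K1mul : ∀ (α : P) (g g' : G), Ψ α (g * g') = Ψ α g * Ψ α g' := by
    intro α g g'
    apply hi_inj
    rw [map_mul, hΨ, hΨ, hΨ, map_mul]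
    group
  have K2inv : ∀ (α : P) (g : G), Ψ α g⁻¹ = (Ψ α g)⁻¹ := by
    intro α g
    apply hi_inj
    rw [map_inv, hΨ, hΨ, map_inv]
    group
  have K3 : ∀ (α β : P) (g : G), Ψ α (Ψ β g) = f α β * Ψ (α*β) g * (f α β)⁻¹ := by
    intro α β g
    apply hi_inj
    rw [hΨ, hΨ, map_mul, map_mul, map_inv, hf, hΨ]
    group
  refine ⟨part1, ?_⟩
  intro γ₁ γ₂ γ₃
  simp only [eCochain, Tcochain]
  rw [show σ γ₁ * σ γ₂ = σ (γ₁*γ₂) from (map_mul σ γ₁ γ₂).symm,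
    show σ γ₂ * σ γ₃ = σ (γ₂*γ₃) from (map_mul σ γ₂ γ₃).symm,
    show γ₁ * (γ₂ * γ₃) = γ₁*γ₂*γ₃ from (mul_assoc γ₁ γ₂ γ₃).symm]
  set x1 : G := Ψ (σ γ₁) ((h γ₂)⁻¹) with hx1
  set x2 : G := (h γ₁)⁻¹ with hx2
  set x3 : G := h (γ₁ * γ₂) with hx3
  set x4 : G := Ψ (σ (γ₁ * γ₂)) ((h γ₃)⁻¹) with hx4
  set x5 : G := Ψ (σ γ₁) (h (γ₂ * γ₃)) with hx5
  set w : G := h (γ₁ * γ₂ * γ₃) with hw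
  have hE5 : Ψ (σ γ₁) ((h (γ₂ * γ₃))⁻¹) = x5⁻¹ := by rw [K2inv, hx5]
  have hE1 : Ψ (σ γ₁) (f (σ γ₂) (σ γ₃)) = x1*x2*x3*x4*(x1*x2*x3)⁻¹*x1*x5 := by
    rw [part1 γ₂ γ₃, K1mul, K1mul, K3, ← map_mul σ, part1 γ₁ γ₂]
  have hE2 : f (σ γ₁) (σ (γ₂*γ₃)) = x5⁻¹*x2*w := by
    rw [part1 γ₁ (γ₂*γ₃), hE5, show γ₁ * (γ₂ * γ₃) = γ₁*γ₂*γ₃ from (mul_assoc γ₁ γ₂ γ₃).symm]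
  have hE3 : f (σ γ₁) (σ γ₂) = x1*x2*x3 := part1 γ₁ γ₂
  have hE4 : f (σ (γ₁*γ₂)) (σ γ₃) = x4*x3⁻¹*w := part1 (γ₁*γ₂) γ₃
  have hE6 : Ψ (σ γ₁) (Ψ (σ γ₂) ((h γ₃)⁻¹)) = x1*x2*x3*x4*(x1*x2*x3)⁻¹ := by
    rw [K3, ← map_mul σ, part1 γ₁ γ₂]
  rw [hE1, hE2, hE3, hE4, hE5, hE6]
  exact Stmt19Aux.key c hc_cocycle hc_norm.1 hc_norm.2 hc_hom hc_bdd x1 x2 x3 x4 x5 w
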